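/- Let q > 0 and define β(m) = (2/m)·I'(m) + (2/m)·I'(m)·(1-m)^{(m-1)/(2m)}·(1+m)^{(m+1)/(2m)}·q for m ∈ (0,1), where I'(m) = (1/2)log((1+m)/(1-m)). Then β is strictly monotonically increasing on (0,1), and β(-m) = β(m) for m ∈ (-1,0). -/

import Mathlib

open Real

noncomputable def auxL (x : ℝ) : ℝ := Real.log (1+x) - Real.log (1-x)

lemma auxL_hasDeriv {x : ℝ} (h1 : -1 < x) (h2 : x < 1) :
    HasDerivAt auxL (2/(1-x^2)) x := by
  have e1 : (1:ℝ)+x ≠ 0 := by nlinarith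
  have e2 : (1:ℝ)-x ≠ 0 := by nlinarith
  have d1 : HasDerivAt (fun y : ℝ => Real.log (1+y)) (1/(1+x)) x := by
    simpa using (((hasDerivAt_id x).const_add 1).log e1)
  have d2 : HasDerivAt (fun y : ℝ => Real.log (1-y)) ((-1)/(1-x)) x := by
    simpa using (((hasDerivAt_id x).const_sub 1).log e2)
  have e3 : (1:ℝ)-x^2 ≠ 0 := by nlinarith
  have := d1.sub d2
  refine this.congr_deriv ?_
  field_simp
  ring

lemma auxL_pos {x : ℝ} (h1 : 0 < x) (h2 : x < 1) : 0 < auxL x := by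
  have := Real.log_pos (by linarith : (1:ℝ) < 1 + x)
  have := Real.log_neg (by linarith) (by linarith : 1 - x < 1)
  unfold auxL; linarith

lemma auxL_gt {x : ℝ} (h1 : 0 < x) (h2 : x < 1) : x < auxL x := by
  have hx : (1:ℝ) - x < Real.exp (-x) := by
    have := Real.add_one_lt_exp (show -x ≠ 0 by intro h; apply h1.ne'; linarith)
    linarith
  have h3 : Real.log (1 - x) < -x := by
    have := Real.log_lt_log (by linarith : (0:ℝ) < 1 - x) hx
    rwa [Real.log_exp] at this
  have := Real.log_pos (by linarith : (1:ℝ) < 1 + x)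
  unfold auxL; linarith

lemma pos_aux (f f' : ℝ → ℝ)
    (hd : ∀ x ∈ Set.Ico (0:ℝ) 1, HasDerivAt f (f' x) x)
    (hp : ∀ x ∈ Set.Ioo (0:ℝ) 1, 0 < f' x)
    (h0 : f 0 = 0) : ∀ x ∈ Set.Ioo (0:ℝ) 1, 0 < f x := by
  have hmono : StrictMonoOn f (Set.Ico (0:ℝ) 1) := by
    apply strictMonoOn_of_deriv_pos (convex_Ico 0 1)
    · exact fun x hx => (hd x hx).continuousAt.continuousWithinAt
    · intro x hx
      rw [interior_Ico] at hx
      rw [(hd x ⟨hx.1.le, hx.2⟩).deriv]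
      exact hp x hx
  intro x hx
  have := hmono (Set.mem_Ico.2 ⟨le_refl 0, one_pos⟩) (Set.mem_Ico.2 ⟨hx.1.le, hx.2⟩) hx.1
  rwa [h0] at this

lemma key_w : ∀ x ∈ Set.Ioo (0:ℝ) 1, (1-x^2) * auxL x < 2*x := by
  have h := pos_aux (fun x => 2*x - (1-x^2) * auxL x) (fun x => 2*x*auxL x)
    (by
      intro x hx
      have h1 : -1 < x := by linarith [hx.1]
      have h2 : x < 1 := hx.2
      have e3 : (1:ℝ)-x^2 ≠ 0 := by nlinarith
      have d1 : HasDerivAt (fun y : ℝ => 1 - y^2) (-(2*x)) x := by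
        simpa using (hasDerivAt_pow 2 x).const_sub 1
      have := ((hasDerivAt_id x).const_mul 2).sub (d1.mul (auxL_hasDeriv h1 h2))
      refine this.congr_deriv ?_
      field_simp
      try ring)
    (by
      intro x hx
      exact mul_pos (by linarith [hx.1] : (0:ℝ) < 2*x) (auxL_pos hx.1 hx.2))
    (by simp [auxL])
  intro x hx
  have := h x hx
  linarith

lemma key_v : ∀ x ∈ Set.Ioo (0:ℝ) 1, 2 * auxL x < 4*x + x*(auxL x)^2 := by
  have h := pos_aux (fun x => 4*x + x*(auxL x)^2 - 2*auxL x)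
    (fun x => (auxL x)^2 + 4*x*(auxL x - x)/(1-x^2))
    (by
      intro x hx
      have h1 : -1 < x := by linarith [hx.1]
      have h2 : x < 1 := hx.2
      have e3 : (1:ℝ)-x^2 ≠ 0 := by nlinarith
      have hL := auxL_hasDeriv h1 h2
      have d1 : HasDerivAt (fun y : ℝ => (auxL y)^2) (2*auxL x*(2/(1-x^2))) x := by
        simpa [mul_comm, mul_assoc, mul_left_comm] using hL.fun_pow 2
      have := (((hasDerivAt_id x).const_mul 4).add ((hasDerivAt_id' x).mul d1)).sub
        (hL.const_mul 2)
      refine this.congr_deriv ?_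
      field_simp
      try ring)
    (by
      intro x hx
      have hLp := auxL_pos hx.1 hx.2
      have hLg := auxL_gt hx.1 hx.2
      have e3 : (0:ℝ) < 1-x^2 := by nlinarith [hx.1, hx.2]
      have t1 : (0:ℝ) < (auxL x)^2 := pow_pos hLp 2
      have t2 : (0:ℝ) < 4*x*(auxL x - x)/(1-x^2) :=
        div_pos (by nlinarith [hx.1]) e3
      linarith)
    (by simp [auxL])
  intro x hx
  have := h x hx
  linarith

lemma key_u : ∀ x ∈ Set.Ioo (0:ℝ) 1, (1-x^2) * (auxL x)^2 < 4*x^2 := by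
  have h := pos_aux (fun x => 4*x^2 - (1-x^2)*(auxL x)^2)
    (fun x => 2*(4*x + x*(auxL x)^2 - 2*auxL x))
    (by
      intro x hx
      have h1 : -1 < x := by linarith [hx.1]
      have h2 : x < 1 := hx.2
      have e3 : (1:ℝ)-x^2 ≠ 0 := by nlinarith
      have hL := auxL_hasDeriv h1 h2
      have d1 : HasDerivAt (fun y : ℝ => 1 - y^2) (-(2*x)) x := by
        simpa using (hasDerivAt_pow 2 x).const_sub 1
      have d2 : HasDerivAt (fun y : ℝ => (auxL y)^2) (2*auxL x*(2/(1-x^2))) x := by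
        simpa [mul_comm, mul_assoc, mul_left_comm] using hL.fun_pow 2
      have := ((hasDerivAt_pow 2 x).const_mul 4).sub (d1.mul d2)
      refine this.congr_deriv ?_
      field_simp
      try ring)
    (by
      intro x hx
      have := key_v x hx
      linarith)
    (by simp [auxL])
  intro x hx
  have := h x hx
  linarith

noncomputable def auxH (x : ℝ) : ℝ :=
  ((x-1)/(2*x))*Real.log (1-x) + ((x+1)/(2*x))*Real.log (1+x)

lemma auxH_hasDeriv {x : ℝ} (h1 : 0 < x) (h2 : x < 1) :
    HasDerivAt auxH ((2*x - auxL x)/(2*x^2)) x := by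
  have e1 : (1:ℝ)+x ≠ 0 := by nlinarith
  have e2 : (1:ℝ)-x ≠ 0 := by nlinarith
  have e0 : x ≠ 0 := h1.ne'
  have e4 : (2:ℝ)*x ≠ 0 := by positivity
  have dl1 : HasDerivAt (fun y : ℝ => Real.log (1+y)) (1/(1+x)) x := by
    simpa using (((hasDerivAt_id x).const_add 1).log e1)
  have dl2 : HasDerivAt (fun y : ℝ => Real.log (1-y)) ((-1)/(1-x)) x := by
    simpa using (((hasDerivAt_id x).const_sub 1).log e2)
  have dn1 : HasDerivAt (fun y : ℝ => y - 1) 1 x := by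
    simpa using (hasDerivAt_id x).sub_const 1
  have dn2 : HasDerivAt (fun y : ℝ => y + 1) 1 x := by
    simpa using (hasDerivAt_id x).add_const 1
  have dd : HasDerivAt (fun y : ℝ => 2*y) 2 x := by
    simpa using (hasDerivAt_id x).const_mul 2
  have dq1 : HasDerivAt (fun y : ℝ => (y-1)/(2*y)) ((1*(2*x) - (x-1)*2)/(2*x)^2) x :=
    dn1.div dd e4
  have dq2 : HasDerivAt (fun y : ℝ => (y+1)/(2*y)) ((1*(2*x) - (x+1)*2)/(2*x)^2) x :=
    dn2.div dd e4
  have := (dq1.mul dl2).add (dq2.mul dl1)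
  refine this.congr_deriv ?_
  unfold auxL
  field_simp
  ring

noncomputable def auxB (q : ℝ) (x : ℝ) : ℝ :=
  auxL x / x + q * (auxL x / x) * Real.exp (auxH x)

lemma auxB_hasDeriv (q : ℝ) {x : ℝ} (h1 : 0 < x) (h2 : x < 1) :
    HasDerivAt (auxB q)
      ((2*x - (1-x^2)*auxL x)/(x^2*(1-x^2)) +
        q * Real.exp (auxH x) * ((4*x^2 - (1-x^2)*(auxL x)^2)/(2*x^3*(1-x^2)))) x := by
  have e0 : x ≠ 0 := h1.ne'
  have e3 : (1:ℝ)-x^2 ≠ 0 := by nlinarith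
  have hL := auxL_hasDeriv (by linarith) h2
  have hf : HasDerivAt (fun y : ℝ => auxL y / y) ((2/(1-x^2)*x - auxL x*1)/x^2) x :=
    hL.div (hasDerivAt_id x) e0
  have hexp : HasDerivAt (fun y : ℝ => Real.exp (auxH y))
      (Real.exp (auxH x) * ((2*x - auxL x)/(2*x^2))) x := (auxH_hasDeriv h1 h2).exp
  have := hf.add (((hf.const_mul q).mul hexp))
  refine this.congr_deriv ?_
  field_simp
  ring

lemma auxB_mono (q : ℝ) (hq : 0 < q) : StrictMonoOn (auxB q) (Set.Ioo (0:ℝ) 1) := by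
  apply strictMonoOn_of_deriv_pos (convex_Ioo 0 1)
  · exact fun x hx => (auxB_hasDeriv q hx.1 hx.2).continuousAt.continuousWithinAt
  · intro x hx
    rw [interior_Ioo] at hx
    rw [(auxB_hasDeriv q hx.1 hx.2).deriv]
    have e3 : (0:ℝ) < 1-x^2 := by nlinarith [hx.1, hx.2]
    have t1 : (0:ℝ) < (2*x - (1-x^2)*auxL x)/(x^2*(1-x^2)) := by
      apply div_pos
      · have := key_w x hx; linarith
      · exact mul_pos (pow_pos hx.1 2) e3
    have t2 : (0:ℝ) < q * Real.exp (auxH x) * ((4*x^2 - (1-x^2)*(auxL x)^2)/(2*x^3*(1-x^2))) := by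
      apply mul_pos (mul_pos hq (Real.exp_pos _))
      apply div_pos
      · have := key_u x hx; linarith
      · exact mul_pos (by nlinarith [pow_pos hx.1 3]) e3
    linarith

/-- Closed-form parametrization
`β(m) = (2/m) I'(m) + (2/m) I'(m) (1-m)^{(m-1)/(2m)} (1+m)^{(m+1)/(2m)} q`
with `I'(m) = (1/2) log((1+m)/(1-m))` is strictly increasing on `(0,1)` and
even: `β(-m) = β(m)` for `m ∈ (-1,0)`. -/
theorem beta_strictMono_and_even (q : ℝ) (hq : 0 < q) :
    StrictMonoOn
      (fun m : ℝ =>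
        (2 / m) * ((1 / 2) * Real.log ((1 + m) / (1 - m))) +
        (2 / m) * ((1 / 2) * Real.log ((1 + m) / (1 - m))) *
          ((1 - m) ^ ((m - 1) / (2 * m)) * (1 + m) ^ ((m + 1) / (2 * m))) * q)
      (Set.Ioo (0 : ℝ) 1) ∧
    ∀ m ∈ Set.Ioo (-1 : ℝ) 0,
      (fun m : ℝ =>
        (2 / m) * ((1 / 2) * Real.log ((1 + m) / (1 - m))) +
        (2 / m) * ((1 / 2) * Real.log ((1 + m) / (1 - m))) *
          ((1 - m) ^ ((m - 1) / (2 * m)) * (1 + m) ^ ((m + 1) / (2 * m))) * q) (-m)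
      = (fun m : ℝ =>
        (2 / m) * ((1 / 2) * Real.log ((1 + m) / (1 - m))) +
        (2 / m) * ((1 / 2) * Real.log ((1 + m) / (1 - m))) *
          ((1 - m) ^ ((m - 1) / (2 * m)) * (1 + m) ^ ((m + 1) / (2 * m))) * q) m := by
  constructor
  · -- strict monotonicity: the function agrees with auxB q on (0,1)
    have heq : ∀ m ∈ Set.Ioo (0:ℝ) 1,
        (2 / m) * ((1 / 2) * Real.log ((1 + m) / (1 - m))) +
        (2 / m) * ((1 / 2) * Real.log ((1 + m) / (1 - m))) *
          ((1 - m) ^ ((m - 1) / (2 * m)) * (1 + m) ^ ((m + 1) / (2 * m))) * q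
        = auxB q m := by
      intro m hm
      have e0 : m ≠ 0 := hm.1.ne'
      have p1 : (0:ℝ) < 1 + m := by linarith [hm.1]
      have p2 : (0:ℝ) < 1 - m := by linarith [hm.2]
      have hlog : Real.log ((1 + m) / (1 - m)) = auxL m :=
        Real.log_div p1.ne' p2.ne'
      have hr1 : (1 - m) ^ ((m - 1) / (2 * m)) = Real.exp (((m-1)/(2*m)) * Real.log (1-m)) := by
        rw [Real.rpow_def_of_pos p2]; ring_nf
      have hr2 : (1 + m) ^ ((m + 1) / (2 * m)) = Real.exp (((m+1)/(2*m)) * Real.log (1+m)) := by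
        rw [Real.rpow_def_of_pos p1]; ring_nf
      rw [hlog, hr1, hr2, ← Real.exp_add]
      unfold auxB auxH
      ring
    intro a ha b hb hab
    have := auxB_mono q hq ha hb hab
    dsimp only
    rw [heq a ha, heq b hb]
    exact this
  · -- evenness
    intro m hm
    have e0 : m ≠ 0 := hm.2.ne
    have p1 : (0:ℝ) < 1 + m := by linarith [hm.1]
    have p2 : (0:ℝ) < 1 - m := by linarith [hm.2]
    dsimp only
    have h1 : (-m - 1)/(2 * -m) = (m+1)/(2*m) := by
      rw [show -m - 1 = -(m+1) by ring, show (2:ℝ) * -m = -(2*m) by ring, neg_div_neg_eq]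
    have h2 : (-m + 1)/(2 * -m) = (m-1)/(2*m) := by
      rw [show -m + 1 = -(m-1) by ring, show (2:ℝ) * -m = -(2*m) by ring, neg_div_neg_eq]
    rw [show (1:ℝ) + -m = 1 - m by ring, show (1:ℝ) - -m = 1 + m by ring, h1, h2]
    have hlog : Real.log ((1 - m) / (1 + m)) = - Real.log ((1 + m) / (1 - m)) := by
      rw [← Real.log_inv, inv_div]
    rw [hlog]
    ring
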